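/- Let m₁, m₂ ∈ ℝ satisfy 0 < m₁ < 1, m₁² < m₂ < m₁. Define α + 1 = (m₁ − m₂)(1 − m₁)/(m₂ − m₁²) and β + 1 = (α + 1) m₁/(1 − m₁). Then the first two (unnormalized) Fourier–Jacobi coefficients vanish: (1+β)(m₁ − 1) + (1+α) m₁ = 0, and ((2+β)(1+β)/2)(1 − 2m₁ + m₂) + (2+α)(2+β)(m₂ − m₁) + ((2+α)(1+α)/2) m₂ = 0. -/
import Mathlib


/-- With the Fourier–Jacobi parameters `α+1 = (m₁−m₂)(1−m₁)/(m₂−m₁²)` and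
`β+1 = (α+1)m₁/(1−m₁)`, the first two (unnormalized) Fourier–Jacobi coefficients
vanish. -/
theorem fourierJacobi_first_two_coeffs_vanish (m₁ m₂ α β : ℝ)
    (h0 : 0 < m₁) (h1 : m₁ < 1) (h2 : m₁ ^ 2 < m₂) (h3 : m₂ < m₁)
    (hα : α + 1 = (m₁ - m₂) * (1 - m₁) / (m₂ - m₁ ^ 2))
    (hβ : β + 1 = (α + 1) * m₁ / (1 - m₁)) :
    (1 + β) * (m₁ - 1) + (1 + α) * m₁ = 0 ∧
    ((2 + β) * (1 + β) / 2) * (1 - 2 * m₁ + m₂) +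
        (2 + α) * (2 + β) * (m₂ - m₁) + ((2 + α) * (1 + α) / 2) * m₂ = 0 := by
  have hm : (1:ℝ) - m₁ ≠ 0 := by linarith
  have hd : m₂ - m₁ ^ 2 ≠ 0 := by linarith
  have hb : β = (α + 1) * m₁ / (1 - m₁) - 1 := by linarith
  subst hb
  have ha : α = (m₁ - m₂) * (1 - m₁) / (m₂ - m₁ ^ 2) - 1 := by linarith
  subst ha
  constructor <;> (field_simp; ring)
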